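/- Let A be a Hom-finite hereditary abelian category over an algebraically closed field k, and let E, F be indecomposable objects of A with Ext¹(F, E) = 0. Then every nonzero morphism f : E → F is either a monomorphism or an epimorphism. In particular, every indecomposable object without self-extensions is exceptional. -/
import Mathlib


open CategoryTheory CategoryTheory.Limits

universe v u

variable (k : Type*) [Field k] [IsAlgClosed k]
variable {A : Type u} [Category.{v} A] [Abelian A] [Linear k A]

/-- `Ext¹(X, Y) = 0`, expressed by the splitting of every short exact sequence
`0 → Y → M → X → 0`. -/
def Ext1IsZero (X Y : A) : Prop :=
  ∀ (M : A) (i : Y ⟶ M) (p : M ⟶ X) (w : i ≫ p = 0), Mono i → Epi p →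
    (ShortComplex.mk i p w).Exact → ∃ r : M ⟶ Y, i ≫ r = 𝟙 Y

/-- The category `A` is hereditary: `Ext²` vanishes, expressed by the fact that for every
monomorphism `m : K ⟶ Y`, every extension of `K` by `W` is the restriction along `m` of an
extension of `Y` by `W` (surjectivity of `Ext¹(Y, W) → Ext¹(K, W)`). -/
def Hereditary : Prop :=
  ∀ (K Y W : A) (m : K ⟶ Y), Mono m →
    ∀ (M : A) (i : W ⟶ M) (p : M ⟶ K) (w : i ≫ p = 0), Mono i → Epi p →
      (ShortComplex.mk i p w).Exact →
      ∃ (N : A) (i' : W ⟶ N) (p' : N ⟶ Y) (w' : i' ≫ p' = 0) (q : M ⟶ N),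
        Mono i' ∧ Epi p' ∧ (ShortComplex.mk i' p' w').Exact ∧
          i ≫ q = i' ∧ q ≫ p' = p ≫ m

section Auxiliary

/-- In an abelian category, an idempotent endomorphism of an indecomposable object is
`0` or the identity. -/
lemma HR.idem_eq_zero_or_id {X : A} (hX : Indecomposable X) (e : X ⟶ X)
    (he : e ≫ e = e) : e = 0 ∨ e = 𝟙 X := by
  obtain ⟨Y, i, r, hir, hri⟩ := IsIdempotentComplete.idempotents_split X e he
  obtain ⟨Z, i', r', hir', hri'⟩ := IsIdempotentComplete.idempotents_split X (𝟙 X - e)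
    (by simp [Preadditive.sub_comp, Preadditive.comp_sub, he])
  haveI : Mono i := mono_of_mono_fac hir
  haveI : Mono i' := mono_of_mono_fac hir'
  have hie : i ≫ e = i := by rw [← hri, ← Category.assoc, hir, Category.id_comp]
  have hie' : i' ≫ e = 0 := by
    have h : i' ≫ (𝟙 X - e) = i' := by
      rw [← hri', ← Category.assoc, hir', Category.id_comp]
    rw [Preadditive.comp_sub, Category.comp_id] at h
    exact sub_eq_self.mp h
  have hinl_snd : i ≫ r' = 0 := by
    have h2 : (i ≫ r') ≫ i' = 0 := by
      rw [Category.assoc, hri', Preadditive.comp_sub, Category.comp_id, hie, sub_self]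
    exact zero_of_comp_mono i' h2
  have hinr_fst : i' ≫ r = 0 := by
    have h2 : (i' ≫ r) ≫ i = 0 := by rw [Category.assoc, hri, hie']
    exact zero_of_comp_mono i h2
  let b : BinaryBicone Y Z :=
    { pt := X, fst := r, snd := r', inl := i, inr := i',
      inl_fst := hir, inl_snd := hinl_snd, inr_fst := hinr_fst, inr_snd := hir' }
  have hb := isBinaryBilimitOfTotal b (by
    show r ≫ i + r' ≫ i' = 𝟙 X
    rw [hri, hri']; abel)
  have hiso : X ≅ Y ⊞ Z := hb.isLimit.conePointUniqueUpToIso (BinaryBiproduct.isLimit Y Z)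
  rcases hX.2 Y Z hiso with h | h
  · left; rw [← hri, h.eq_zero_of_src i, comp_zero]
  · right
    have h0 : 𝟙 X - e = 0 := by rw [← hri', h.eq_zero_of_src i', comp_zero]
    rw [sub_eq_zero] at h0
    exact h0.symm

/-- Every endomorphism of an indecomposable object in a Hom-finite linear category over an
algebraically closed field is a scalar plus a nilpotent. -/
lemma HR.exists_nilpotent_shift {X : A} [FiniteDimensional k (X ⟶ X)]
    (hX : Indecomposable X) (s : End X) :
    ∃ lam : k, IsNilpotent (s - algebraMap k (End X) lam) := by
  classical
  haveI : Nontrivial (End X) := by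
    refine ⟨1, 0, fun h => hX.1 ?_⟩
    rw [IsZero.iff_id_eq_zero]
    exact h
  haveI : Module.Finite k (End X) := inferInstanceAs (FiniteDimensional k (X ⟶ X))
  have hint : IsIntegral k s := IsIntegral.of_finite k s
  set P := minpoly k s with hPdef
  have hPmonic : P.Monic := minpoly.monic hint
  have hPne : P ≠ 0 := hPmonic.ne_zero
  have hdeg : 0 < P.natDegree := minpoly.natDegree_pos hint
  obtain ⟨lam, hroot⟩ := IsAlgClosed.exists_root P
    (by simpa using (Polynomial.natDegree_pos_iff_degree_pos.mp hdeg).ne')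
  set m := P.rootMultiplicity lam with hmdef
  have hmpos : 0 < m := (Polynomial.rootMultiplicity_pos hPne).mpr hroot
  obtain ⟨Q, hPQ, hndvd⟩ := P.exists_eq_pow_rootMultiplicity_mul_and_not_dvd hPne lam
  have hcop : IsCoprime ((Polynomial.X - Polynomial.C lam) ^ m) Q :=
    ((Polynomial.irreducible_X_sub_C lam).coprime_iff_not_dvd.mpr hndvd).pow_left
  obtain ⟨a, b, hab⟩ := hcop
  set e : End X := Polynomial.aeval s (a * (Polynomial.X - Polynomial.C lam) ^ m) with hedef
  set w : End X := Polynomial.aeval s (b * Q) with hwdef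
  have h1 : e + w = 1 := by
    rw [hedef, hwdef, ← map_add, hab, map_one]
  have hew : e * w = 0 := by
    rw [hedef, hwdef, ← map_mul]
    have : a * (Polynomial.X - Polynomial.C lam) ^ m * (b * Q) = a * b * P := by
      rw [hPQ]; ring
    rw [this, map_mul, minpoly.aeval, mul_zero]
  have hee : e ≫ e = e := by
    have hmul : e * e = e := by
      have := congrArg (fun z => e * z) h1
      simpa [mul_add, hew] using this
    calc e ≫ e = e * e := (End.mul_def e e).symm
      _ = e := hmul
  rcases HR.idem_eq_zero_or_id hX e hee with h0 | h1'
  · -- e = 0, so w = 1 and aeval Q is a unit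
    refine ⟨lam, m, ?_⟩
    have hw1 : w = 1 := by rw [← h1, h0, zero_add]
    have hvB : Polynomial.aeval s Q * Polynomial.aeval s b = 1 := by
      rw [← map_mul, mul_comm, ← hwdef, hw1]
    have huv : ((s - algebraMap k (End X) lam) ^ m) * Polynomial.aeval s Q = 0 := by
      have : ((Polynomial.X - Polynomial.C lam) ^ m : Polynomial k) * Q = P := hPQ.symm
      calc ((s - algebraMap k (End X) lam) ^ m) * Polynomial.aeval s Q
          = Polynomial.aeval s (((Polynomial.X - Polynomial.C lam) ^ m) * Q) := by
            rw [map_mul, map_pow, map_sub, Polynomial.aeval_X, Polynomial.aeval_C]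
        _ = Polynomial.aeval s P := by rw [this]
        _ = 0 := minpoly.aeval k s
    calc (s - algebraMap k (End X) lam) ^ m
        = ((s - algebraMap k (End X) lam) ^ m) * (Polynomial.aeval s Q * Polynomial.aeval s b) := by
          rw [hvB, mul_one]
      _ = (((s - algebraMap k (End X) lam) ^ m) * Polynomial.aeval s Q) * Polynomial.aeval s b := by
          rw [mul_assoc]
      _ = 0 := by rw [huv, zero_mul]
  · -- e = 1 : contradiction
    exfalso
    have hw0 : w = 0 := by
      have h2 := h1
      rw [h1'] at h2
      exact add_eq_left.mp h2
    have hdvd : P ∣ b * Q := minpoly.dvd k s (by rw [← hwdef, hw0])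
    have hXl : (Polynomial.X - Polynomial.C lam) ∣ b := by
      have hprime := Polynomial.prime_X_sub_C (R := k) lam
      have h1 : (Polynomial.X - Polynomial.C lam) ∣ b * Q :=
        dvd_trans (dvd_trans (Polynomial.dvd_iff_isRoot.mpr hroot) (dvd_refl P)) hdvd
      rcases hprime.2.2 b Q h1 with h | h
      · exact h
      · exact absurd h hndvd
    have hblam : b.eval lam = 0 := by
      obtain ⟨c, hc⟩ := hXl
      simp [hc]
    have := congrArg (Polynomial.eval lam) hab
    simp [Polynomial.eval_mul, Polynomial.eval_pow, hblam,
      zero_pow hmpos.ne'] at this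

/-- Dichotomy: every endomorphism of an indecomposable object is invertible, or differs
from the identity by an invertible. -/
lemma HR.isIso_or_isIso_one_sub {X : A} [FiniteDimensional k (X ⟶ X)]
    (hX : Indecomposable X) (s : X ⟶ X) : IsIso s ∨ IsIso (𝟙 X - s) := by
  obtain ⟨lam, hn⟩ := HR.exists_nilpotent_shift k hX (show End X from s)
  by_cases hlam : lam = 0
  · right
    rw [hlam, map_zero, sub_zero] at hn
    have h1 : IsUnit ((1 : End X) - (show End X from s)) := hn.isUnit_one_sub
    have h2 : IsIso ((1 : End X) - (show End X from s)) := (isUnit_iff_isIso _).mp h1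
    exact h2
  · left
    have hu : IsUnit (algebraMap k (End X) lam) :=
      (isUnit_iff_ne_zero.mpr hlam).map (algebraMap k (End X))
    have hcomm : Commute ((show End X from s) - algebraMap k (End X) lam)
        (algebraMap k (End X) lam) := (Algebra.commutes lam _).symm
    have h1 : IsUnit (algebraMap k (End X) lam +
        ((show End X from s) - algebraMap k (End X) lam)) :=
      hn.isUnit_add_left_of_commute hu hcomm
    rw [add_sub_cancel] at h1
    exact (isUnit_iff_isIso _).mp h1

lemma HR.eq_zero_of_mono_of_nilpotent {X : A} (t : End X)
    (hm : Mono (show X ⟶ X from t)) :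
    ∀ n : ℕ, t ^ n = 0 → t = 0 := by
  haveI := hm
  intro n
  induction n with
  | zero =>
    intro h
    rw [pow_zero] at h
    calc t = 1 * t := (one_mul t).symm
      _ = 0 * t := by rw [h]
      _ = 0 := zero_mul t
  | succ n ih =>
    intro h
    rw [pow_succ'] at h
    have h' : (show X ⟶ X from t ^ n) ≫ (show X ⟶ X from t) = 0 := h
    exact ih (zero_of_comp_mono (show X ⟶ X from t) h')

lemma HR.eq_zero_of_epi_of_nilpotent {X : A} (t : End X)
    (hm : Epi (show X ⟶ X from t)) :
    ∀ n : ℕ, t ^ n = 0 → t = 0 := by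
  haveI := hm
  intro n
  induction n with
  | zero =>
    intro h
    rw [pow_zero] at h
    calc t = 1 * t := (one_mul t).symm
      _ = 0 * t := by rw [h]
      _ = 0 := zero_mul t
  | succ n ih =>
    intro h
    rw [pow_succ] at h
    have h' : (show X ⟶ X from t) ≫ (show X ⟶ X from t ^ n) = 0 := h
    exact ih (zero_of_epi_comp (show X ⟶ X from t) h')

end Auxiliary

section Main

/-- The heart of the Happel–Ringel lemma: a nonzero morphism between indecomposables with
`Ext¹(F, E) = 0` is mono or epi. -/
lemma HR.mono_or_epi [∀ X Y : A, FiniteDimensional k (X ⟶ Y)]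
    (hhered : Hereditary (A := A))
    (E F : A) (hE : Indecomposable E) (hF : Indecomposable F)
    (hext : Ext1IsZero F E) (f : E ⟶ F) (hf : f ≠ 0) : Mono f ∨ Epi f := by
  classical
  -- the kernel/coimage short exact sequence 0 → K → E → C → 0
  set κ : kernel f ⟶ E := kernel.ι f with hκdef
  set π : E ⟶ cokernel κ := cokernel.π κ with hπdef
  have wκπ : κ ≫ π = 0 := cokernel.condition κ
  set m : cokernel κ ⟶ F := cokernel.desc κ f (kernel.condition f) with hmdef
  have hm : π ≫ m = f := cokernel.π_desc κ f (kernel.condition f)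
  have hmono_m : Mono m := by
    have heq : m = Abelian.coimageImageComparison f ≫ Abelian.image.ι f := by
      have h1 : π ≫ (Abelian.coimageImageComparison f ≫ Abelian.image.ι f) = f :=
        Abelian.coimage_image_factorisation f
      exact (cancel_epi π).mp (by rw [h1, hm])
    rw [heq]
    exact mono_comp _ _
  have hexact1 : (ShortComplex.mk κ π wκπ).Exact :=
    ShortComplex.exact_of_g_is_cokernel _ (cokernelIsCokernel κ)
  -- lift the extension along the mono m using heredity
  obtain ⟨N, i', p', w', q, hi', hp', hexact2, hq1, hq2⟩ :=
    hhered (cokernel κ) F (kernel f) m hmono_m E κ π wκπ inferInstance inferInstance hexact1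
  haveI := hi'
  haveI := hp'
  have hf2 : q ≫ p' = f := by rw [hq2, hm]
  -- push out the lifted extension 0 → K → N → F → 0 along κ : K → E
  set φ : kernel f ⟶ N ⊞ E := biprod.lift i' (-κ) with hφdef
  set inlN : N ⟶ cokernel φ := biprod.inl ≫ cokernel.π φ with hinlNdef
  set inrN : E ⟶ cokernel φ := biprod.inr ≫ cokernel.π φ with hinrNdef
  have hpush : i' ≫ inlN = κ ≫ inrN := by
    have h2 : (i' ≫ biprod.inl + (-κ) ≫ biprod.inr) ≫ cokernel.π φ = 0 := by
      rw [← biprod.lift_eq]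
      exact cokernel.condition φ
    simp only [Preadditive.add_comp, Preadditive.neg_comp, Category.assoc] at h2
    rw [add_neg_eq_zero] at h2
    exact h2
  have hφdesc : φ ≫ biprod.desc p' (0 : E ⟶ F) = 0 := by
    rw [hφdef, biprod.lift_desc]
    simp [w']
  set p'' : cokernel φ ⟶ F := cokernel.desc φ (biprod.desc p' 0) hφdesc with hp''def
  have hπp'' : cokernel.π φ ≫ p'' = biprod.desc p' 0 := cokernel.π_desc _ _ _
  have hdesc_eq : biprod.desc p' (0 : E ⟶ F) = biprod.fst ≫ p' := by
    apply biprod.hom_ext' <;> simp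
  have hinlp'' : inlN ≫ p'' = p' := by
    rw [hinlNdef, Category.assoc, hπp'']
    simp
  have hinrp'' : inrN ≫ p'' = 0 := by
    rw [hinrNdef, Category.assoc, hπp'']
    simp
  haveI hepi_p'' : Epi p'' := epi_of_epi_fac hinlp''
  have hexact3 : (ShortComplex.mk φ (cokernel.π φ) (cokernel.condition φ)).Exact :=
    ShortComplex.exact_of_g_is_cokernel _ (cokernelIsCokernel φ)
  have hmono_inrN : Mono inrN := by
    apply Preadditive.mono_of_cancel_zero
    intro T x hx
    have hx' : (x ≫ biprod.inr) ≫ cokernel.π φ = 0 := by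
      rw [Category.assoc]
      exact hx
    obtain ⟨T', pT, hpT, x1, hfac⟩ := hexact3.exact_up_to_refinements (x ≫ biprod.inr) hx'
    have hx1 : x1 = 0 := by
      have h2 : x1 ≫ i' = 0 := by
        have h3 := congrArg (fun z => z ≫ biprod.fst) hfac
        simpa [hφdef] using h3.symm
      exact zero_of_comp_mono i' h2
    have h4 : pT ≫ x = 0 := by
      have h5 := congrArg (fun z => z ≫ biprod.snd) hfac
      simpa [hx1] using h5
    exact zero_of_epi_comp pT h4
  have hexact4 : (ShortComplex.mk inrN p'' hinrp'').Exact := by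
    rw [ShortComplex.exact_iff_exact_up_to_refinements]
    intro T x2 hx2
    obtain ⟨T1, π1, hπ1, y, hy⟩ := surjective_up_to_refinements_of_epi (cokernel.π φ) x2
    have hyp : (y ≫ biprod.fst) ≫ p' = 0 := by
      have h : π1 ≫ x2 ≫ p'' = y ≫ cokernel.π φ ≫ p'' := by
        rw [← Category.assoc, hy, Category.assoc]
      rw [hx2, comp_zero, hπp'', hdesc_eq] at h
      rw [Category.assoc]
      exact h.symm
    obtain ⟨T2, π2, hπ2, kk, hkk⟩ := hexact2.exact_up_to_refinements (y ≫ biprod.fst) hyp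
    refine ⟨T2, π2 ≫ π1, epi_comp _ _, (π2 ≫ y - kk ≫ φ) ≫ biprod.snd, ?_⟩
    have hy'fst : (π2 ≫ y - kk ≫ φ) ≫ biprod.fst = 0 := by
      rw [Preadditive.sub_comp, Category.assoc, Category.assoc,
        show φ ≫ biprod.fst = i' from by rw [hφdef]; simp, hkk, sub_self]
    have hdec : ((π2 ≫ y - kk ≫ φ) ≫ biprod.snd) ≫ biprod.inr = π2 ≫ y - kk ≫ φ := by
      apply biprod.hom_ext
      · simp only [Category.assoc, biprod.inr_fst, comp_zero]
        exact hy'fst.symm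
      · simp only [Category.assoc, biprod.inr_snd, Category.comp_id]
    calc (π2 ≫ π1) ≫ x2
        = π2 ≫ π1 ≫ x2 := Category.assoc _ _ _
      _ = π2 ≫ y ≫ cokernel.π φ := by rw [hy]
      _ = (π2 ≫ y) ≫ cokernel.π φ := (Category.assoc _ _ _).symm
      _ = (π2 ≫ y - kk ≫ φ) ≫ cokernel.π φ := by
          rw [Preadditive.sub_comp, Category.assoc kk, cokernel.condition, comp_zero, sub_zero]
      _ = (((π2 ≫ y - kk ≫ φ) ≫ biprod.snd) ≫ biprod.inr) ≫ cokernel.π φ := by rw [hdec]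
      _ = ((π2 ≫ y - kk ≫ φ) ≫ biprod.snd) ≫ inrN := by
          rw [hinrNdef, Category.assoc]
  -- the pushed-out extension splits, since Ext¹(F, E) = 0
  obtain ⟨r, hr⟩ := hext (cokernel φ) inrN p'' hinrp'' hmono_inrN hepi_p'' hexact4
  set s : E ⟶ E := q ≫ inlN ≫ r with hsdef
  have hκs : κ ≫ s = κ := by
    calc κ ≫ q ≫ inlN ≫ r = (κ ≫ q) ≫ inlN ≫ r := (Category.assoc _ _ _).symm
      _ = i' ≫ inlN ≫ r := by rw [hq1]
      _ = (i' ≫ inlN) ≫ r := (Category.assoc _ _ _).symm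
      _ = (κ ≫ inrN) ≫ r := by rw [hpush]
      _ = κ ≫ inrN ≫ r := Category.assoc _ _ _
      _ = κ := by rw [hr, Category.comp_id]
  have hκd : κ ≫ (q ≫ inlN - inrN) = 0 := by
    rw [Preadditive.comp_sub, ← Category.assoc, hq1, hpush, sub_self]
  set u : cokernel κ ⟶ cokernel φ := cokernel.desc κ (q ≫ inlN - inrN) hκd with hudef
  have hπu : π ≫ u = q ≫ inlN - inrN := cokernel.π_desc _ _ _
  have hπur : π ≫ (u ≫ r) = s - 𝟙 E := by
    calc π ≫ (u ≫ r) = (π ≫ u) ≫ r := (Category.assoc _ _ _).symm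
      _ = (q ≫ inlN - inrN) ≫ r := by rw [hπu]
      _ = (q ≫ inlN) ≫ r - inrN ≫ r := Preadditive.sub_comp _ _ _
      _ = s - 𝟙 E := by rw [hr, Category.assoc, hsdef]
  rcases HR.isIso_or_isIso_one_sub k hE s with hiso | hiso
  · -- `s` invertible : `q` is split mono, `F ≅ coker κ ⊞ coker q`, so `q` is epi and `f` is epi
    right
    set ρ : N ⟶ E := (inlN ≫ r) ≫ inv s with hρdef
    have hqρ : q ≫ ρ = 𝟙 E := by
      calc q ≫ (inlN ≫ r) ≫ inv s = (q ≫ inlN ≫ r) ≫ inv s := by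
            rw [← Category.assoc]
        _ = s ≫ inv s := by rw [← hsdef]
        _ = 𝟙 E := IsIso.hom_inv_id s
    have hi'ρ : i' ≫ ρ = κ := by
      calc i' ≫ ρ = (κ ≫ q) ≫ ρ := by rw [hq1]
        _ = κ ≫ (q ≫ ρ) := Category.assoc _ _ _
        _ = κ := by rw [hqρ, Category.comp_id]
    set σ : N ⟶ cokernel q := cokernel.π q with hσdef
    have hqdesc : q ≫ (𝟙 N - ρ ≫ q) = 0 := by
      rw [Preadditive.comp_sub, Category.comp_id, ← Category.assoc, hqρ, Category.id_comp,
        sub_self]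
    set j : cokernel q ⟶ N := cokernel.desc q (𝟙 N - ρ ≫ q) hqdesc with hjdef
    have hσj : σ ≫ j = 𝟙 N - ρ ≫ q := cokernel.π_desc _ _ _
    have hiρπ : i' ≫ ρ ≫ π = 0 := by
      rw [← Category.assoc, hi'ρ, wκπ]
    have hiσ : i' ≫ σ = 0 := by
      calc i' ≫ σ = (κ ≫ q) ≫ σ := by rw [hq1]
        _ = κ ≫ (q ≫ σ) := Category.assoc _ _ _
        _ = 0 := by rw [hσdef, cokernel.condition, comp_zero]
    set πC : F ⟶ cokernel κ := hexact2.desc (ρ ≫ π) hiρπ with hπCdef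
    have hp'πC : p' ≫ πC = ρ ≫ π := hexact2.g_desc _ _
    set pQ : F ⟶ cokernel q := hexact2.desc σ hiσ with hpQdef
    have hp'pQ : p' ≫ pQ = σ := hexact2.g_desc _ _
    have hjρ : j ≫ ρ = 0 := by
      apply zero_of_epi_comp σ
      rw [← Category.assoc, hσj, Preadditive.sub_comp, Category.id_comp, Category.assoc,
        hqρ, Category.comp_id, sub_self]
    have hjσ : j ≫ σ = 𝟙 (cokernel q) := by
      apply (cancel_epi σ).mp
      rw [← Category.assoc, hσj, Preadditive.sub_comp, Category.id_comp, Category.assoc,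
        hσdef, cokernel.condition, comp_zero, sub_zero, Category.comp_id]
    have hmπC : m ≫ πC = 𝟙 (cokernel κ) := by
      apply (cancel_epi π).mp
      calc π ≫ m ≫ πC = (π ≫ m) ≫ πC := (Category.assoc _ _ _).symm
        _ = (q ≫ p') ≫ πC := by rw [hm, hf2]
        _ = q ≫ (p' ≫ πC) := Category.assoc _ _ _
        _ = q ≫ ρ ≫ π := by rw [hp'πC]
        _ = (q ≫ ρ) ≫ π := (Category.assoc _ _ _).symm
        _ = π := by rw [hqρ, Category.id_comp]
        _ = π ≫ 𝟙 (cokernel κ) := (Category.comp_id _).symm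
    have hmpQ : m ≫ pQ = 0 := by
      apply (cancel_epi π).mp
      calc π ≫ m ≫ pQ = (π ≫ m) ≫ pQ := (Category.assoc _ _ _).symm
        _ = (q ≫ p') ≫ pQ := by rw [hm, hf2]
        _ = q ≫ (p' ≫ pQ) := Category.assoc _ _ _
        _ = q ≫ σ := by rw [hp'pQ]
        _ = 0 := by rw [hσdef, cokernel.condition]
        _ = π ≫ 0 := (comp_zero).symm
    have hjp'πC : (j ≫ p') ≫ πC = 0 := by
      calc (j ≫ p') ≫ πC = j ≫ (p' ≫ πC) := Category.assoc _ _ _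
        _ = j ≫ ρ ≫ π := by rw [hp'πC]
        _ = (j ≫ ρ) ≫ π := (Category.assoc _ _ _).symm
        _ = 0 := by rw [hjρ, zero_comp]
    have hjp'pQ : (j ≫ p') ≫ pQ = 𝟙 (cokernel q) := by
      calc (j ≫ p') ≫ pQ = j ≫ (p' ≫ pQ) := Category.assoc _ _ _
        _ = j ≫ σ := by rw [hp'pQ]
        _ = 𝟙 (cokernel q) := hjσ
    have htotal : πC ≫ m + pQ ≫ (j ≫ p') = 𝟙 F := by
      apply (cancel_epi p').mp
      have e1 : p' ≫ πC ≫ m = ρ ≫ q ≫ p' := by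
        rw [← Category.assoc, hp'πC, Category.assoc, hm, ← hf2]
      have e2 : p' ≫ pQ ≫ (j ≫ p') = p' - ρ ≫ q ≫ p' := by
        rw [← Category.assoc, hp'pQ, ← Category.assoc, hσj, Preadditive.sub_comp,
          Category.id_comp, Category.assoc]
      rw [Preadditive.comp_add, e1, e2, Category.comp_id]
      abel
    let b : BinaryBicone (cokernel κ) (cokernel q) :=
      { pt := F, fst := πC, snd := pQ, inl := m, inr := j ≫ p',
        inl_fst := hmπC, inl_snd := hmpQ, inr_fst := hjp'πC, inr_snd := hjp'pQ }
    have hb := isBinaryBilimitOfTotal b htotal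
    have hiso2 : F ≅ cokernel κ ⊞ cokernel q :=
      hb.isLimit.conePointUniqueUpToIso (BinaryBiproduct.isLimit _ _)
    rcases hF.2 _ _ hiso2 with hzero | hzero
    · exact absurd (by rw [← hm, hzero.eq_zero_of_src m, comp_zero]) hf
    · haveI hq_epi : Epi q := by
        apply Preadditive.epi_of_cancel_zero
        intro R g hg
        have hg2 : g = cokernel.π q ≫ cokernel.desc q g hg := (cokernel.π_desc q g hg).symm
        rw [hg2, hzero.eq_zero_of_tgt (cokernel.π q), zero_comp]
      rw [← hf2]
      exact epi_comp q p'
  · -- `𝟙 E - s` invertible : `π` is split mono, hence iso, hence `f` is mono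
    left
    have h1 : π ≫ (-(u ≫ r)) = 𝟙 E - s := by
      rw [Preadditive.comp_neg, hπur, neg_sub]
    have hfacπ : π ≫ (-(u ≫ r)) ≫ inv (𝟙 E - s) = 𝟙 E := by
      rw [← Category.assoc, h1, IsIso.hom_inv_id]
    haveI : Mono π := mono_of_mono_fac hfacπ
    haveI : IsIso π := isIso_of_mono_of_epi π
    have hκ0 : κ = 0 := by
      calc κ = (κ ≫ π) ≫ inv π := by rw [Category.assoc, IsIso.hom_inv_id, Category.comp_id]
        _ = 0 := by rw [wκπ, zero_comp]
    apply Preadditive.mono_of_cancel_zero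
    intro P g hg
    have hg2 : g = kernel.lift f g hg ≫ κ := (kernel.lift_ι f g hg).symm
    rw [hg2, hκ0, comp_zero]

end Main

/-- Happel–Ringel Lemma.  Let `A` be a Hom-finite hereditary abelian category over an
algebraically closed field `k`, and let `E`, `F` be indecomposable objects with
`Ext¹(F, E) = 0`.  Then every nonzero morphism `f : E ⟶ F` is a monomorphism or an
epimorphism.  In particular, every indecomposable object without self-extensions is
exceptional (its endomorphism algebra is `k`, and it has no self-extensions). -/
theorem happel_ringel
    [∀ X Y : A, FiniteDimensional k (X ⟶ Y)]
    (hhered : Hereditary (A := A))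
    (E F : A) (hE : Indecomposable E) (hF : Indecomposable F)
    (hext : Ext1IsZero F E) :
    (∀ f : E ⟶ F, f ≠ 0 → Mono f ∨ Epi f) ∧
    (∀ X : A, Indecomposable X → Ext1IsZero X X → Module.finrank k (X ⟶ X) = 1) := by
  constructor
  · exact fun f hf => HR.mono_or_epi k hhered E F hE hF hext f hf
  · intro X hX hXext
    have hid : (𝟙 X : X ⟶ X) ≠ 0 := fun h => hX.1 ((IsZero.iff_id_eq_zero X).mpr h)
    apply finrank_eq_one (𝟙 X) hid
    intro w
    obtain ⟨lam, n, hn⟩ := HR.exists_nilpotent_shift k hX (show End X from w)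
    refine ⟨lam, ?_⟩
    have ht : (show End X from w) - algebraMap k (End X) lam = 0 := by
      by_contra ht
      rcases HR.mono_or_epi k hhered X X hX hX hXext
          (show X ⟶ X from (show End X from w) - algebraMap k (End X) lam) ht with hmono | hepi
      · exact ht (HR.eq_zero_of_mono_of_nilpotent _ hmono n hn)
      · exact ht (HR.eq_zero_of_epi_of_nilpotent _ hepi n hn)
    have hw : (show End X from w) = algebraMap k (End X) lam := sub_eq_zero.mp ht
    calc lam • 𝟙 X = lam • (1 : End X) := rfl
      _ = algebraMap k (End X) lam := (Algebra.algebraMap_eq_smul_one lam).symm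
      _ = w := hw.symm
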